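/- Let γ ∈ (0,1), let n ≥ 4 be an integer, and let f ∈ C³(ℝⁿ) be bounded together with all its partial derivatives up to order 3. Then the integrals I₀ = ∫_{ℝⁿ} w_{1,0}(x̄)^p dx̄ and I₂ = ∫_{ℝⁿ} |x̄|² w_{1,0}(x̄)^p dx̄ are finite, and there exist C > 0 and ε₀ > 0 such that for all ε ∈ (0, ε₀): | ∫_{ℝⁿ} f(x̄) w_{ε,0}(x̄)^p dx̄ − f(0) I₀ − ε² (Δf(0)/(2n)) I₂ | ≤ C ε³, where Δf = Σ_{i=1}^n ∂_{ii} f is the Euclidean Laplacian. -/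

import Mathlib

open MeasureTheory Real

noncomputable section

namespace Stmt14

variable {n : ℕ}

def Sq (z : Fin n → ℝ) : ℝ := ∑ i, z i ^ 2

lemma Sq_nonneg (z : Fin n → ℝ) : 0 ≤ Sq z := Finset.sum_nonneg fun i _ => sq_nonneg _

def uu (z : Fin n → ℝ) : ℝ := Real.sqrt (1 + Sq z)

lemma one_le_uu (z : Fin n → ℝ) : 1 ≤ uu z := by
  rw [show (1:ℝ) = Real.sqrt 1 by simp]
  exact Real.sqrt_le_sqrt (by linarith [Sq_nonneg z])

lemma uu_pos (z : Fin n → ℝ) : 0 < uu z := lt_of_lt_of_le one_pos (one_le_uu z)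

lemma uu_sq (z : Fin n → ℝ) : uu z ^ 2 = 1 + Sq z := Real.sq_sqrt (by linarith [Sq_nonneg z])

lemma sq_le_uu_sq (z : Fin n → ℝ) : Sq z ≤ uu z ^ 2 := by rw [uu_sq]; linarith

lemma norm_le_uu (z : Fin n → ℝ) : ‖z‖ ≤ uu z := by
  rw [pi_norm_le_iff_of_nonneg (uu_pos z).le]
  intro i
  rw [Real.norm_eq_abs, ← Real.sqrt_sq_eq_abs]
  apply Real.sqrt_le_sqrt
  have : z i ^ 2 ≤ Sq z := Finset.single_le_sum (fun j _ => sq_nonneg (z j)) (Finset.mem_univ i)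
  linarith

lemma uu_lower (z : Fin n → ℝ) : (1 + ‖z‖) / 2 ≤ uu z := by
  have h1 : ‖z‖ ≤ uu z := norm_le_uu z
  have h2 : 0 ≤ ‖z‖ := norm_nonneg z
  have := one_le_uu z; linarith

lemma continuous_Sq : Continuous (Sq (n := n)) := by
  unfold Sq; fun_prop

lemma continuous_uu : Continuous (uu (n := n)) := by
  unfold uu
  exact Real.continuous_sqrt.comp (continuous_const.add continuous_Sq)

lemma continuous_uu_inv_pow (k : ℕ) :
    Continuous (fun z : Fin n → ℝ => ((uu z)⁻¹) ^ k) :=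
  (continuous_uu.inv₀ fun z => (uu_pos z).ne').pow k

lemma integrable_uu_pow {k : ℕ} (hk : n < k) :
    Integrable (fun z : Fin n → ℝ => ((uu z)⁻¹) ^ k) := by
  have hfr : (Module.finrank ℝ (Fin n → ℝ) : ℝ) < (k : ℝ) := by
    simp only [Module.finrank_fintype_fun_eq_card, Fintype.card_fin]
    exact_mod_cast hk
  have hmaj : Integrable (fun z : Fin n → ℝ => (2:ℝ)^k * (1 + ‖z‖) ^ (-(k:ℝ))) :=
    (integrable_one_add_norm hfr).const_mul _
  refine hmaj.mono' (continuous_uu_inv_pow k).aestronglyMeasurable (ae_of_all _ fun z => ?_)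
  have h1 : (0:ℝ) < 1 + ‖z‖ := by positivity
  rw [Real.norm_eq_abs, abs_of_nonneg (pow_nonneg (inv_nonneg.2 (uu_pos z).le) k)]
  rw [Real.rpow_neg h1.le, Real.rpow_natCast]
  have hinv : (uu z)⁻¹ ≤ 2 / (1 + ‖z‖) := by
    rw [inv_le_comm₀ (uu_pos z) (by positivity), inv_div]
    exact uu_lower z
  calc ((uu z)⁻¹) ^ k ≤ (2 / (1 + ‖z‖)) ^ k :=
        pow_le_pow_left₀ (inv_nonneg.2 (uu_pos z).le) hinv k
    _ = 2 ^ k * ((1 + ‖z‖) ^ k)⁻¹ := by rw [div_pow, div_eq_mul_inv]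

lemma integrable_of_le_uu {F : (Fin n → ℝ) → ℝ} {c : ℝ} {k : ℕ} (hk : n < k)
    (hmeas : AEStronglyMeasurable F volume)
    (hb : ∀ z, |F z| ≤ c * ((uu z)⁻¹) ^ k) : Integrable F :=
  ((integrable_uu_pow hk).const_mul c).mono' hmeas
    (ae_of_all _ fun z => by rw [Real.norm_eq_abs]; exact hb z)

lemma uu_pow_cancel (z : Fin n → ℝ) (k m : ℕ) :
    uu z ^ m * ((uu z)⁻¹) ^ (k + m) = ((uu z)⁻¹) ^ k := by
  have h := (uu_pos z).ne'
  rw [pow_add, inv_pow, inv_pow]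
  field_simp

lemma Sq_neg (z : Fin n → ℝ) : Sq (-z) = Sq z := by
  unfold Sq; simp

lemma Sq_smul (ε : ℝ) (z : Fin n → ℝ) : Sq (ε • z) = ε ^ 2 * Sq z := by
  unfold Sq
  rw [Finset.mul_sum]
  refine Finset.sum_congr rfl fun i _ => ?_
  simp [mul_pow]

/-- Negation of the `i`-th coordinate, as a measurable equiv. -/
def negCoord (i : Fin n) : (Fin n → ℝ) ≃ᵐ (Fin n → ℝ) where
  toFun z := fun k => if k = i then -(z k) else z k
  invFun z := fun k => if k = i then -(z k) else z k
  left_inv z := by funext k; by_cases h : k = i <;> simp [h]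
  right_inv z := by funext k; by_cases h : k = i <;> simp [h]
  measurable_toFun := measurable_pi_iff.mpr fun k => by
    have : (fun z : Fin n → ℝ => if k = i then -(z k) else z k) =
        if k = i then (fun z : Fin n → ℝ => -(z k)) else (fun z => z k) := by
      by_cases h : k = i <;> simp [h]
    show Measurable fun z : Fin n → ℝ => if k = i then -(z k) else z k
    rw [this]
    by_cases h : k = i
    · simp only [if_pos h]; exact (measurable_pi_apply k).neg
    · simp only [if_neg h]; exact measurable_pi_apply k
  measurable_invFun := measurable_pi_iff.mpr fun k => by
    have : (fun z : Fin n → ℝ => if k = i then -(z k) else z k) =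
        if k = i then (fun z : Fin n → ℝ => -(z k)) else (fun z => z k) := by
      by_cases h : k = i <;> simp [h]
    show Measurable fun z : Fin n → ℝ => if k = i then -(z k) else z k
    rw [this]
    by_cases h : k = i
    · simp only [if_pos h]; exact (measurable_pi_apply k).neg
    · simp only [if_neg h]; exact measurable_pi_apply k

lemma negCoord_apply (i : Fin n) (z : Fin n → ℝ) (k : Fin n) :
    negCoord i z k = if k = i then -(z k) else z k := rfl

lemma measurePreserving_negCoord (i : Fin n) :
    MeasurePreserving (⇑(negCoord i)) (volume : Measure (Fin n → ℝ)) volume := by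
  have h := MeasureTheory.volume_preserving_pi
    (f := fun (k : Fin n) (x : ℝ) => if k = i then -x else x)
    (fun k => by
      by_cases h : k = i
      · simpa [h] using Measure.measurePreserving_neg (volume : Measure ℝ)
      · simp only [h, ↓reduceIte]; exact MeasurePreserving.id _)
  exact h

lemma Sq_negCoord (i : Fin n) (z : Fin n → ℝ) : Sq (negCoord i z) = Sq z := by
  unfold Sq
  refine Finset.sum_congr rfl fun k _ => ?_
  rw [negCoord_apply]
  by_cases h : k = i <;> simp [h]

/-- Swap of two coordinates, as a measurable equiv. -/
def swapCoord (i j : Fin n) : (Fin n → ℝ) ≃ᵐ (Fin n → ℝ) :=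
  MeasurableEquiv.arrowCongr' (Equiv.swap i j) (MeasurableEquiv.refl ℝ)

lemma swapCoord_apply (i j : Fin n) (z : Fin n → ℝ) (k : Fin n) :
    swapCoord i j z k = z (Equiv.swap i j k) := by
  simp [swapCoord, MeasurableEquiv.arrowCongr', Equiv.arrowCongr', Equiv.arrowCongr]

lemma measurePreserving_swapCoord (i j : Fin n) :
    MeasurePreserving (⇑(swapCoord i j)) (volume : Measure (Fin n → ℝ)) volume :=
  MeasureTheory.volume_preserving_arrowCongr' _ _ (MeasurePreserving.id _)

lemma Sq_swapCoord (i j : Fin n) (z : Fin n → ℝ) : Sq (swapCoord i j z) = Sq z := by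
  unfold Sq
  have : ∀ k, swapCoord i j z k = z (Equiv.swap i j k) := swapCoord_apply i j z
  simp_rw [this]
  exact Equiv.sum_comp (Equiv.swap i j) (fun k => z k ^ 2)

end Stmt14

open Stmt14

/-- The normalizing constant `α_{n,γ}`. -/
def alphaC (n : ℕ) (γ : ℝ) : ℝ :=
  2 ^ (((n : ℝ) - 2 * γ) / 2) *
    (Real.Gamma (((n : ℝ) + 2 * γ) / 2) / Real.Gamma (((n : ℝ) - 2 * γ) / 2)) ^
      (((n : ℝ) - 2 * γ) / (4 * γ))

/-- The bubble `w_{ε,0}` on `ℝ^n`. -/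
def bubble (n : ℕ) (γ ε : ℝ) (y : Fin n → ℝ) : ℝ :=
  alphaC n γ * (ε / (ε ^ 2 + ∑ i, (y i) ^ 2)) ^ (((n : ℝ) - 2 * γ) / 2)

/-- The exponent `p = 2n/(n-2γ) = 2* + 1`. -/
def pexp (n : ℕ) (γ : ℝ) : ℝ := 2 * (n : ℝ) / ((n : ℝ) - 2 * γ)

/-- The Laplacian of `f` at a point, as a sum of second partial derivatives. -/
def lapAt (n : ℕ) (f : (Fin n → ℝ) → ℝ) (x : Fin n → ℝ) : ℝ :=
  ∑ i, fderiv ℝ (fun z => fderiv ℝ f z (Pi.single i 1)) x (Pi.single i 1)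

set_option maxHeartbeats 2000000 in
/-- Second-order expansion of `∫ f w_{ε,0}^{2*+1}` as `ε → 0`. -/
theorem statement14 :
    ∀ (γ : ℝ) (n : ℕ) (f : (Fin n → ℝ) → ℝ), 0 < γ → γ < 1 → 4 ≤ n →
      ContDiff ℝ 3 f →
      (∀ m : ℕ, m ≤ 3 → ∃ Cb : ℝ, ∀ x, ‖iteratedFDeriv ℝ m f x‖ ≤ Cb) →
      Integrable (fun y : Fin n → ℝ => bubble n γ 1 y ^ pexp n γ) volume ∧
      Integrable (fun y : Fin n → ℝ => (∑ i, (y i) ^ 2) * bubble n γ 1 y ^ pexp n γ) volume ∧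
      ∃ C ε₀ : ℝ, 0 < C ∧ 0 < ε₀ ∧ ∀ ε : ℝ, 0 < ε → ε < ε₀ →
        |(∫ y : Fin n → ℝ, f y * bubble n γ ε y ^ pexp n γ) -
            f 0 * (∫ y : Fin n → ℝ, bubble n γ 1 y ^ pexp n γ) -
            ε ^ 2 * (lapAt n f 0 / (2 * (n : ℝ))) *
              (∫ y : Fin n → ℝ, (∑ i, (y i) ^ 2) * bubble n γ 1 y ^ pexp n γ)| ≤
          C * ε ^ 3 := by
  intro γ n f hγ0 hγ1 hn hf hbd
  classical
  have hn0 : 0 < n := by omega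
  have hnR : (0:ℝ) < n := by exact_mod_cast hn0
  have hn4 : (4:ℝ) ≤ (n:ℝ) := by exact_mod_cast hn
  have hn2γ : 0 < (n:ℝ) - 2*γ := by linarith
  have halpha : 0 < alphaC n γ := by
    have h1 : 0 < ((n:ℝ) + 2*γ)/2 := by linarith
    have h2 : 0 < ((n:ℝ) - 2*γ)/2 := by linarith
    exact mul_pos (Real.rpow_pos_of_pos two_pos _)
      (Real.rpow_pos_of_pos (div_pos (Real.Gamma_pos_of_pos h1) (Real.Gamma_pos_of_pos h2)) _)
  set A := alphaC n γ ^ pexp n γ with hAdef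
  have hApos : 0 < A := Real.rpow_pos_of_pos halpha _
  set G : (Fin n → ℝ) → ℝ := fun z => A * ((uu z)⁻¹) ^ (2*n) with hGdef
  have hGnonneg : ∀ z, 0 ≤ G z := fun z => by
    have := (uu_pos z).le; positivity
  have hGcont : Continuous G := continuous_const.mul (continuous_uu_inv_pow _)
  have hexp : ((n:ℝ) - 2*γ)/2 * pexp n γ = n := by
    unfold pexp; field_simp
  have hkey : ∀ ε : ℝ, 0 < ε → ∀ y : Fin n → ℝ,
      bubble n γ ε y ^ pexp n γ = A * (ε / (ε^2 + Sq y))^n := by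
    intro ε hε y
    have hden : 0 < ε^2 + Sq y := add_pos_of_pos_of_nonneg (pow_pos hε 2) (Sq_nonneg y)
    have ht : 0 ≤ ε / (ε^2 + Sq y) := div_nonneg hε.le hden.le
    show (alphaC n γ * (ε / (ε ^ 2 + Sq y)) ^ (((n : ℝ) - 2 * γ) / 2)) ^ pexp n γ = _
    rw [Real.mul_rpow halpha.le (Real.rpow_nonneg ht _), ← Real.rpow_mul ht, hexp,
      Real.rpow_natCast]
  have hb1G : ∀ y : Fin n → ℝ, bubble n γ 1 y ^ pexp n γ = G y := by
    intro y
    rw [hkey 1 one_pos]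
    congr 1
    have h1 : (1:ℝ)/(1^2 + Sq y) = ((uu y)^2)⁻¹ := by rw [uu_sq]; norm_num
    rw [h1, ← inv_pow, ← pow_mul]
  -- cancellation helper
  have hcan : ∀ (z : Fin n → ℝ) (k m : ℕ), k + m = 2*n →
      uu z ^ m * ((uu z)⁻¹)^(2*n) = ((uu z)⁻¹)^k := by
    intro z k m h
    rw [← h]; exact uu_pow_cancel z k m
  -- integrability of F * G for F with polynomial growth of order m
  have hIbound : ∀ (F : (Fin n → ℝ) → ℝ) (c : ℝ) (m : ℕ), m ≤ 3 → Continuous F →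
      (∀ z, |F z| ≤ c * uu z ^ m) → Integrable (fun z => F z * G z) := by
    intro F c m hm hFc hb
    have hc0 : 0 ≤ c := by
      have h1 := (abs_nonneg (F 0)).trans (hb (0 : Fin n → ℝ))
      have h2 : 0 < uu (0 : Fin n → ℝ) ^ m := pow_pos (uu_pos _) m
      nlinarith
    refine integrable_of_le_uu (k := 2*n-m) (by omega)
      ((hFc.mul hGcont).aestronglyMeasurable) (c := c*A) (fun z => ?_)
    calc |F z * G z| = |F z| * G z := by rw [abs_mul, abs_of_nonneg (hGnonneg z)]
      _ ≤ (c * uu z ^ m) * G z := mul_le_mul_of_nonneg_right (hb z) (hGnonneg z)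
      _ = (c*A) * (uu z ^ m * ((uu z)⁻¹)^(2*n)) := by rw [hGdef]; ring
      _ = (c*A) * ((uu z)⁻¹)^(2*n-m) := by rw [hcan z (2*n-m) m (by omega)]
  have IG : Integrable G := (integrable_uu_pow (show n < 2*n by omega)).const_mul A
  have ISG : Integrable (fun z => Sq z * G z) := by
    refine hIbound Sq 1 2 (by omega) continuous_Sq (fun z => ?_)
    rw [one_mul, abs_of_nonneg (Sq_nonneg z)]; exact sq_le_uu_sq z
  have IuuG3 : Integrable (fun z => uu z ^ 3 * G z) := by
    refine hIbound _ 1 3 le_rfl (continuous_uu.pow 3) (fun z => ?_)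
    rw [one_mul, abs_of_nonneg (pow_nonneg (uu_pos z).le 3)]
  have hzi_le : ∀ (z : Fin n → ℝ) i, |z i| ≤ uu z := by
    intro z i
    calc |z i| = ‖z i‖ := rfl
      _ ≤ ‖z‖ := norm_le_pi_norm z i
      _ ≤ uu z := norm_le_uu z
  have Iz2G : ∀ i, Integrable (fun z : Fin n → ℝ => z i ^ 2 * G z) := by
    intro i
    refine hIbound _ 1 2 (by omega) ((continuous_apply i).pow 2) (fun z => ?_)
    rw [one_mul, abs_of_nonneg (sq_nonneg _), ← sq_abs]
    exact pow_le_pow_left₀ (abs_nonneg _) (hzi_le z i) 2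
  have IzijG : ∀ i j, Integrable (fun z : Fin n → ℝ => z i * z j * G z) := by
    intro i j
    refine hIbound _ 1 2 (by omega) ((continuous_apply i).mul (continuous_apply j))
      (fun z => ?_)
    rw [one_mul, abs_mul, pow_two]
    exact mul_le_mul (hzi_le z i) (hzi_le z j) (abs_nonneg _) (uu_pos z).le
  -- derivative setup
  have hD1 : ContDiff ℝ 2 (fderiv ℝ f) := hf.fderiv_right (m := 2) (by norm_num)
  have hD2 : ContDiff ℝ 1 (fderiv ℝ (fderiv ℝ f)) := hD1.fderiv_right (m := 1) (by norm_num)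
  have hd1 : Differentiable ℝ (fderiv ℝ f) := hD1.differentiable (by norm_num)
  have hd2 : Differentiable ℝ (fderiv ℝ (fderiv ℝ f)) := hD2.differentiable (by norm_num)
  have hdf : Differentiable ℝ f := hf.differentiable (by norm_num)
  set L0 : (Fin n → ℝ) →L[ℝ] ℝ := fderiv ℝ f 0 with hL0def
  set B : (Fin n → ℝ) →L[ℝ] (Fin n → ℝ) →L[ℝ] ℝ := fderiv ℝ (fderiv ℝ f) 0 with hBdef
  have hsymm : ∀ v w, B v w = B w v := fun v w =>
    (hf.contDiffAt.isSymmSndFDerivAt (by norm_num)) v w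
  obtain ⟨M0, hM0⟩ := hbd 0 (by norm_num)
  obtain ⟨M3, hM3⟩ := hbd 3 le_rfl
  have hM0' : ∀ x, |f x| ≤ M0 := fun x => by
    have := hM0 x; rwa [norm_iteratedFDeriv_zero, Real.norm_eq_abs] at this
  have hM3nn : 0 ≤ M3 := le_trans (norm_nonneg _) (hM3 0)
  letI : NormedAddCommGroup ((Fin n → ℝ) →L[ℝ] (Fin n → ℝ) →L[ℝ] (Fin n → ℝ) →L[ℝ] ℝ) :=
    ContinuousLinearMap.toNormedAddCommGroup (𝕜 := ℝ) (𝕜₂ := ℝ) (σ₁₂ := RingHom.id ℝ)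
      (E := Fin n → ℝ) (F := (Fin n → ℝ) →L[ℝ] (Fin n → ℝ) →L[ℝ] ℝ)
  letI : NormedSpace ℝ ((Fin n → ℝ) →L[ℝ] (Fin n → ℝ) →L[ℝ] (Fin n → ℝ) →L[ℝ] ℝ) :=
    ContinuousLinearMap.toNormedSpace (𝕜 := ℝ) (𝕜₂ := ℝ) (σ₁₂ := RingHom.id ℝ)
      (E := Fin n → ℝ) (F := (Fin n → ℝ) →L[ℝ] (Fin n → ℝ) →L[ℝ] ℝ)
  have hM3' : ∀ x, ‖fderiv ℝ (fderiv ℝ (fderiv ℝ f)) x‖ ≤ M3 := by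
    intro x
    have h : ‖fderiv ℝ (fderiv ℝ (fderiv ℝ f)) x‖ = ‖iteratedFDeriv ℝ 3 f x‖ := by
      rw [← norm_iteratedFDeriv_fderiv, ← norm_iteratedFDeriv_fderiv, ← norm_iteratedFDeriv_fderiv]
      convert (norm_iteratedFDeriv_zero (𝕜 := ℝ)
        (f := fderiv ℝ (fderiv ℝ (fderiv ℝ f))) (x := x)).symm
    rw [h]; exact hM3 x
  have IL0G : Integrable (fun z => L0 z * G z) := by
    refine hIbound _ ‖L0‖ 1 (by omega) L0.continuous (fun z => ?_)
    rw [pow_one]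
    calc |L0 z| ≤ ‖L0‖ * ‖z‖ := L0.le_opNorm z
      _ ≤ ‖L0‖ * uu z := mul_le_mul_of_nonneg_left (norm_le_uu z) (norm_nonneg _)
  have hBcont : Continuous (fun z : Fin n → ℝ => B z z) := by
    exact isBoundedBilinearMap_apply.continuous.comp (B.continuous.prodMk continuous_id)
  have hBnn : (0:ℝ) ≤ ‖B‖ := B.opNorm_nonneg
  have hBzle : ∀ z, |B z z| ≤ ‖B‖ * uu z ^ 2 := by
    intro z
    have h3 : ‖z‖ ≤ uu z := norm_le_uu z
    have h4 : (0:ℝ) ≤ ‖z‖ := norm_nonneg _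
    calc |B z z| = ‖B z z‖ := (Real.norm_eq_abs _).symm
      _ ≤ ‖B z‖ * ‖z‖ := (B z).le_opNorm z
      _ ≤ (‖B‖ * uu z) * uu z := by
          refine mul_le_mul ?_ h3 h4 (mul_nonneg hBnn (uu_pos z).le)
          calc ‖B z‖ ≤ ‖B‖ * ‖z‖ := B.le_opNorm z
            _ ≤ ‖B‖ * uu z := mul_le_mul_of_nonneg_left h3 hBnn
      _ = ‖B‖ * uu z ^ 2 := by ring
  have IBG : Integrable (fun z => B z z * G z) :=
    hIbound _ ‖B‖ 2 (by omega) hBcont hBzle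
  -- G depends only on Sq
  have huuSq : ∀ z w : Fin n → ℝ, Sq z = Sq w → G z = G w := by
    intro z w h
    have huw : uu z = uu w := by unfold uu; rw [h]
    simp only [hGdef, huw]
  -- odd integral vanishes
  have hT1 : ∫ z : Fin n → ℝ, L0 z * G z = 0 := by
    have h := integral_neg_eq_self (fun z : Fin n → ℝ => L0 z * G z) volume
    have heq : ∀ z : Fin n → ℝ, L0 (-z) * G (-z) = -(L0 z * G z) := by
      intro z
      rw [map_neg, huuSq (-z) z (Sq_neg z)]
      ring
    simp only [heq] at h
    rw [integral_neg] at h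
    linarith
  have hoff : ∀ i j : Fin n, i ≠ j → ∫ z : Fin n → ℝ, z i * z j * G z = 0 := by
    intro i j hij
    have h := (measurePreserving_negCoord (n := n) i).integral_comp'
      (fun z : Fin n → ℝ => z i * z j * G z)
    have heq : ∀ z : Fin n → ℝ,
        (negCoord i z) i * (negCoord i z) j * G (negCoord i z) = -(z i * z j * G z) := by
      intro z
      rw [huuSq _ z (Sq_negCoord i z), negCoord_apply, negCoord_apply, if_pos rfl,
        if_neg (Ne.symm hij)]
      ring
    simp only [heq] at h
    rw [integral_neg] at h
    linarith
  have hswap : ∀ i j : Fin n,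
      ∫ z : Fin n → ℝ, z i ^ 2 * G z = ∫ z : Fin n → ℝ, z j ^ 2 * G z := by
    intro i j
    have h := (measurePreserving_swapCoord (n := n) i j).integral_comp'
      (fun z : Fin n → ℝ => z j ^ 2 * G z)
    have heq : ∀ z : Fin n → ℝ,
        (swapCoord i j z) j ^ 2 * G (swapCoord i j z) = z i ^ 2 * G z := by
      intro z
      rw [huuSq _ z (Sq_swapCoord i j z), swapCoord_apply, Equiv.swap_apply_right]
    simp only [heq] at h
    exact h
  -- bilinear expansion
  have hv : ∀ v : Fin n → ℝ, v = ∑ i, v i • (Pi.single i 1 : Fin n → ℝ) := by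
    intro v; funext k
    rw [Finset.sum_apply]
    simp [Pi.single_apply]
  have hBzz : ∀ v w : Fin n → ℝ,
      B v w = ∑ i, ∑ j, v i * w j * B (Pi.single i 1) (Pi.single j 1) := by
    have step1 : ∀ v' : Fin n → ℝ, B v' = ∑ i, v' i • B (Pi.single i 1) := by
      intro v'
      conv_lhs => rw [hv v']
      rw [map_sum]
      exact Finset.sum_congr rfl fun i _ => B.map_smul _ _
    intro v w
    rw [step1 v, ContinuousLinearMap.sum_apply]
    refine Finset.sum_congr rfl fun i _ => ?_
    rw [ContinuousLinearMap.smul_apply, smul_eq_mul]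
    conv_lhs => rw [hv w, map_sum]
    rw [Finset.mul_sum]
    refine Finset.sum_congr rfl fun j _ => ?_
    rw [(B (Pi.single i 1)).map_smul, smul_eq_mul]
    ring
  have hLap : lapAt n f 0 = ∑ i, B (Pi.single i 1) (Pi.single i 1) := by
    unfold lapAt
    refine Finset.sum_congr rfl fun i _ => ?_
    rw [fderiv_clm_apply (hd1 0) (differentiableAt_const _)]
    simp [ContinuousLinearMap.flip_apply]
    rfl
  -- Taylor estimates
  have hstepA : ∀ x : Fin n → ℝ, ‖fderiv ℝ (fderiv ℝ f) x - B‖ ≤ M3 * ‖x‖ := by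
    intro x
    have h := Convex.norm_image_sub_le_of_norm_hasFDerivWithin_le
      (f := fderiv ℝ (fderiv ℝ f)) (f' := fun y => fderiv ℝ (fderiv ℝ (fderiv ℝ f)) y)
      (s := Set.univ) (fun y _ => (hd2 y).hasFDerivAt.hasFDerivWithinAt)
      (fun y _ => hM3' y) convex_univ (Set.mem_univ 0) (Set.mem_univ x)
    rw [sub_zero] at h
    exact h
  have hstepB : ∀ x : Fin n → ℝ, ‖fderiv ℝ f x - L0 - B x‖ ≤ M3 * ‖x‖^2 := by
    intro x
    have hxs : x ∈ Metric.closedBall (0 : Fin n → ℝ) ‖x‖ := by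
      simp [Metric.mem_closedBall]
    have h0s : (0 : Fin n → ℝ) ∈ Metric.closedBall (0 : Fin n → ℝ) ‖x‖ := by
      simp [norm_nonneg]
    have hder : ∀ y ∈ Metric.closedBall (0 : Fin n → ℝ) ‖x‖,
        HasFDerivWithinAt (fun y => fderiv ℝ f y - L0 - B y)
          (fderiv ℝ (fderiv ℝ f) y - B) (Metric.closedBall (0 : Fin n → ℝ) ‖x‖) y := by
      intro y _
      exact (((hd1 y).hasFDerivAt.sub_const L0).sub B.hasFDerivAt).hasFDerivWithinAt
    have hbound : ∀ y ∈ Metric.closedBall (0 : Fin n → ℝ) ‖x‖,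
        ‖fderiv ℝ (fderiv ℝ f) y - B‖ ≤ M3 * ‖x‖ := by
      intro y hy
      refine (hstepA y).trans ?_
      have hyx : ‖y‖ ≤ ‖x‖ := by simpa using hy
      exact mul_le_mul_of_nonneg_left hyx hM3nn
    have h := Convex.norm_image_sub_le_of_norm_hasFDerivWithin_le hder hbound
      (convex_closedBall _ _) h0s hxs
    rw [← hL0def] at h
    rw [sub_zero, sub_self, zero_sub, map_zero, neg_zero, sub_zero] at h
    calc ‖fderiv ℝ f x - L0 - B x‖ ≤ M3 * ‖x‖ * ‖x‖ := h
      _ = M3 * ‖x‖^2 := by ring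
  have hstepC : ∀ x : Fin n → ℝ,
      |f x - f 0 - L0 x - (1/2) * B x x| ≤ M3 * ‖x‖^3 := by
    intro x
    have hxs : x ∈ Metric.closedBall (0 : Fin n → ℝ) ‖x‖ := by
      simp [Metric.mem_closedBall]
    have h0s : (0 : Fin n → ℝ) ∈ Metric.closedBall (0 : Fin n → ℝ) ‖x‖ := by
      simp [norm_nonneg]
    have hder : ∀ y ∈ Metric.closedBall (0 : Fin n → ℝ) ‖x‖,
        HasFDerivWithinAt (fun y => f y - f 0 - L0 y - (1/2) * B y y)
          (fderiv ℝ f y - L0 - B y) (Metric.closedBall (0 : Fin n → ℝ) ‖x‖) y := by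
      intro y _
      have h3 : HasFDerivAt (fun y : Fin n → ℝ => B y y) (B y + B.flip y) y := by
        have h := (B.hasFDerivAt (x := y)).clm_apply (hasFDerivAt_id y)
        simpa using h
      have h4 : HasFDerivAt (fun y : Fin n → ℝ => (1/2) * B y y)
          ((1/2 : ℝ) • (B y + B.flip y)) y := h3.const_mul _
      have h5 : ((1/2 : ℝ) • (B y + B.flip y)) = B y := by
        ext v
        simp only [ContinuousLinearMap.smul_apply, ContinuousLinearMap.add_apply,
          ContinuousLinearMap.flip_apply, smul_eq_mul]
        rw [hsymm v y]
        ring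
      rw [h5] at h4
      exact ((((hdf y).hasFDerivAt.sub_const (f 0)).sub L0.hasFDerivAt).sub
        h4).hasFDerivWithinAt
    have hbound : ∀ y ∈ Metric.closedBall (0 : Fin n → ℝ) ‖x‖,
        ‖fderiv ℝ f y - L0 - B y‖ ≤ M3 * ‖x‖^2 := by
      intro y hy
      refine (hstepB y).trans ?_
      have hyx : ‖y‖ ≤ ‖x‖ := by simpa using hy
      exact mul_le_mul_of_nonneg_left (pow_le_pow_left₀ (norm_nonneg _) hyx 2) hM3nn
    have h := Convex.norm_image_sub_le_of_norm_hasFDerivWithin_le hder hbound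
      (convex_closedBall _ _) h0s hxs
    simp only [map_zero, sub_zero, sub_self, mul_zero, zero_sub, neg_zero,
      ContinuousLinearMap.zero_apply] at h
    calc |f x - f 0 - L0 x - (1/2) * B x x| = ‖f x - f 0 - L0 x - (1/2) * B x x‖ :=
          (Real.norm_eq_abs _).symm
      _ ≤ M3 * ‖x‖^2 * ‖x‖ := h
      _ = M3 * ‖x‖^3 := by ring
  -- scaling identity
  have hfr : Module.finrank ℝ (Fin n → ℝ) = n := by
    simp [Module.finrank_fintype_fun_eq_card]
  have hE1 : ∀ ε : ℝ, 0 < ε →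
      ∫ y : Fin n → ℝ, f y * bubble n γ ε y ^ pexp n γ
        = ∫ z : Fin n → ℝ, f (ε • z) * G z := by
    intro ε hε
    have hεn : (0:ℝ) < ε ^ n := pow_pos hε n
    have h2 : ∀ z : Fin n → ℝ, bubble n γ ε (ε • z) ^ pexp n γ = (ε^n)⁻¹ * G z := by
      intro z
      rw [hkey ε hε, Sq_smul]
      have hden : (0:ℝ) < 1 + Sq z := by linarith [Sq_nonneg z]
      have hq : ε / (ε^2 + ε^2 * Sq z) = ε⁻¹ * (1 + Sq z)⁻¹ := by
        have h1 : ε ≠ 0 := hε.ne'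
        have h2 : (1 + Sq z) ≠ 0 := hden.ne'
        rw [show ε^2 + ε^2 * Sq z = ε^2 * (1+Sq z) by ring]
        field_simp
      rw [hq, mul_pow, hGdef]
      have huu2 : ((1:ℝ) + Sq z)⁻¹ ^ n = ((uu z)⁻¹)^(2*n) := by
        rw [← uu_sq z, ← inv_pow, ← pow_mul]
      rw [huu2, inv_pow]
      ring
    have h1 := MeasureTheory.Measure.integral_comp_smul (volume : Measure (Fin n → ℝ))
      (fun y => f y * bubble n γ ε y ^ pexp n γ) ε
    rw [hfr] at h1
    simp only [h2] at h1
    rw [abs_of_pos (inv_pos.mpr hεn), smul_eq_mul] at h1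
    have h3 : ∫ z : Fin n → ℝ, f (ε • z) * ((ε^n)⁻¹ * G z)
        = (ε^n)⁻¹ * ∫ z : Fin n → ℝ, f (ε • z) * G z := by
      simp_rw [show ∀ z : Fin n → ℝ, f (ε • z) * ((ε^n)⁻¹ * G z)
        = (ε^n)⁻¹ * (f (ε • z) * G z) from fun z => by ring]
      exact integral_const_mul _ _
    rw [h3] at h1
    exact (mul_left_cancel₀ (inv_ne_zero hεn.ne') h1).symm
  -- quadratic symmetry
  have hsum2 : ∫ z : Fin n → ℝ, Sq z * G z = ∑ i, ∫ z : Fin n → ℝ, z i ^ 2 * G z := by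
    rw [← integral_finset_sum _ (fun i _ => Iz2G i)]
    congr 1
    funext z
    rw [show Sq z = ∑ i, z i ^ 2 from rfl, Finset.sum_mul]
  have hc : ∀ i, (n:ℝ) * ∫ z : Fin n → ℝ, z i ^ 2 * G z = ∫ z : Fin n → ℝ, Sq z * G z := by
    intro i
    rw [hsum2, Finset.sum_congr rfl (fun j _ => hswap j i), Finset.sum_const,
      Finset.card_univ, Fintype.card_fin, nsmul_eq_mul]
  have hquad : ∫ z : Fin n → ℝ, B z z * G z
      = lapAt n f 0 / n * ∫ z : Fin n → ℝ, Sq z * G z := by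
    have hpt : (fun z : Fin n → ℝ => B z z * G z) =
        fun z => ∑ i, ∑ j, B (Pi.single i 1) (Pi.single j 1) * (z i * z j * G z) := by
      funext z
      rw [hBzz z z, Finset.sum_mul]
      refine Finset.sum_congr rfl fun i _ => ?_
      rw [Finset.sum_mul]
      exact Finset.sum_congr rfl fun j _ => by ring
    rw [hpt, integral_finset_sum _
      (fun i _ => integrable_finset_sum _ (fun j _ => (IzijG i j).const_mul _))]
    have hinner : ∀ i, ∫ z : Fin n → ℝ,
        ∑ j, B (Pi.single i 1) (Pi.single j 1) * (z i * z j * G z)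
        = B (Pi.single i 1) (Pi.single i 1) * ∫ z : Fin n → ℝ, z i ^ 2 * G z := by
      intro i
      rw [integral_finset_sum _ (fun j _ => (IzijG i j).const_mul _)]
      rw [Finset.sum_eq_single i]
      · rw [integral_const_mul]
        congr 1
        congr 1
        funext z
        rw [pow_two]
      · intro j _ hji
        rw [integral_const_mul, hoff i j (Ne.symm hji), mul_zero]
      · intro hmem; exact absurd (Finset.mem_univ i) hmem
    rw [Finset.sum_congr rfl (fun i _ => hinner i)]
    have hci : ∀ i : Fin n, ∫ z : Fin n → ℝ, z i ^ 2 * G z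
        = (∫ z : Fin n → ℝ, Sq z * G z) / n := by
      intro i
      rw [← hc i]
      field_simp
    rw [Finset.sum_congr rfl (fun i _ => by rw [hci i]), ← Finset.sum_mul, hLap]
    ring
  -- final assembly
  have hJnn : 0 ≤ ∫ z : Fin n → ℝ, uu z ^ 3 * G z :=
    integral_nonneg fun z => mul_nonneg (pow_nonneg (uu_pos z).le 3) (hGnonneg z)
  refine ⟨?_, ?_, M3 * (∫ z : Fin n → ℝ, uu z ^ 3 * G z) + 1, 1, by positivity, one_pos, ?_⟩
  · rw [show (fun y : Fin n → ℝ => bubble n γ 1 y ^ pexp n γ) = G from funext hb1G]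
    exact IG
  · rw [show (fun y : Fin n → ℝ => (∑ i, (y i) ^ 2) * bubble n γ 1 y ^ pexp n γ)
      = fun z => Sq z * G z from funext fun y => by rw [hb1G]; rfl]
    exact ISG
  · intro ε hε hε1
    simp_rw [hb1G]
    rw [show (∫ y : Fin n → ℝ, (∑ i, (y i) ^ 2) * G y) = ∫ y : Fin n → ℝ, Sq y * G y from rfl]
    -- pointwise Taylor decomposition
    have hRt : ∀ z : Fin n → ℝ, f (ε • z) * G z
        = f 0 * G z + ε * (L0 z * G z) + (ε^2/2) * (B z z * G z)
          + (f (ε • z) - f 0 - L0 (ε • z) - (1/2) * B (ε • z) (ε • z)) * G z := by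
      intro z
      have h1 : L0 (ε • z) = ε * L0 z := by rw [L0.map_smul, smul_eq_mul]
      have h2 : B (ε • z) (ε • z) = ε^2 * B z z := by
        rw [B.map_smul, ContinuousLinearMap.smul_apply, (B z).map_smul, smul_eq_mul,
          smul_eq_mul]
        ring
      rw [h1, h2]
      ring
    have hIf : Integrable (fun z : Fin n → ℝ => f (ε • z) * G z) := by
      refine hIbound _ M0 0 (by omega)
        (hf.continuous.comp (continuous_const_smul ε)) (fun z => ?_)
      simpa using hM0' (ε • z)
    have hIR : Integrable (fun z : Fin n → ℝ =>
        (f (ε • z) - f 0 - L0 (ε • z) - (1/2) * B (ε • z) (ε • z)) * G z) := by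
      have heq : (fun z : Fin n → ℝ =>
          (f (ε • z) - f 0 - L0 (ε • z) - (1/2) * B (ε • z) (ε • z)) * G z)
          = fun z => f (ε • z) * G z - f 0 * G z - ε * (L0 z * G z)
            - (ε^2/2) * (B z z * G z) := by
        funext z
        have h1 : L0 (ε • z) = ε * L0 z := by rw [L0.map_smul, smul_eq_mul]
        have h2 : B (ε • z) (ε • z) = ε^2 * B z z := by
          rw [B.map_smul, ContinuousLinearMap.smul_apply, (B z).map_smul, smul_eq_mul,
            smul_eq_mul]
          ring
        rw [h1, h2]
        ring
      rw [heq]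
      exact ((hIf.sub (IG.const_mul (f 0))).sub (IL0G.const_mul ε)).sub (IBG.const_mul _)
    have hsplit : ∫ z : Fin n → ℝ, f (ε • z) * G z
        = f 0 * (∫ z : Fin n → ℝ, G z) + ε * (∫ z : Fin n → ℝ, L0 z * G z)
          + (ε^2/2) * (∫ z : Fin n → ℝ, B z z * G z)
          + ∫ z : Fin n → ℝ,
              (f (ε • z) - f 0 - L0 (ε • z) - (1/2) * B (ε • z) (ε • z)) * G z := by
      rw [show (fun z : Fin n → ℝ => f (ε • z) * G z) = fun z =>
        f 0 * G z + ε * (L0 z * G z) + (ε^2/2) * (B z z * G z)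
          + (f (ε • z) - f 0 - L0 (ε • z) - (1/2) * B (ε • z) (ε • z)) * G z
        from funext hRt]
      have hIa : Integrable (fun z : Fin n → ℝ => f 0 * G z + ε * (L0 z * G z)) :=
        (IG.const_mul _).add (IL0G.const_mul _)
      have hIb : Integrable (fun z : Fin n → ℝ =>
          f 0 * G z + ε * (L0 z * G z) + (ε^2/2) * (B z z * G z)) :=
        hIa.add (IBG.const_mul _)
      rw [integral_add hIb hIR, integral_add hIa (IBG.const_mul _),
        integral_add (IG.const_mul _) (IL0G.const_mul _)]
      simp_rw [integral_const_mul]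
    have hRb : ∀ z : Fin n → ℝ,
        |(f (ε • z) - f 0 - L0 (ε • z) - (1/2) * B (ε • z) (ε • z)) * G z|
          ≤ (M3 * ε^3) * (uu z ^ 3 * G z) := by
      intro z
      rw [abs_mul, abs_of_nonneg (hGnonneg z)]
      have h1 := hstepC (ε • z)
      have h2 : ‖ε • z‖ = ε * ‖z‖ := by
        rw [norm_smul, Real.norm_eq_abs, abs_of_pos hε]
      have h3 : |f (ε • z) - f 0 - L0 (ε • z) - (1/2) * B (ε • z) (ε • z)|
          ≤ M3 * (ε * uu z)^3 := by
        refine h1.trans ?_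
        rw [h2]
        refine mul_le_mul_of_nonneg_left ?_ hM3nn
        exact pow_le_pow_left₀ (by positivity)
          (mul_le_mul_of_nonneg_left (norm_le_uu z) hε.le) 3
      calc |f (ε • z) - f 0 - L0 (ε • z) - (1/2) * B (ε • z) (ε • z)| * G z
          ≤ (M3 * (ε * uu z)^3) * G z := mul_le_mul_of_nonneg_right h3 (hGnonneg z)
        _ = (M3 * ε^3) * (uu z ^ 3 * G z) := by ring
    have hRint : |∫ z : Fin n → ℝ,
        (f (ε • z) - f 0 - L0 (ε • z) - (1/2) * B (ε • z) (ε • z)) * G z|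
          ≤ (M3 * ε^3) * ∫ z : Fin n → ℝ, uu z ^ 3 * G z := by
      have h := norm_integral_le_of_norm_le (IuuG3.const_mul (M3 * ε^3))
        (ae_of_all _ (fun z => by rw [Real.norm_eq_abs]; exact hRb z))
      rwa [Real.norm_eq_abs, integral_const_mul] at h
    rw [hE1 ε hε, hsplit, hT1, hquad]
    have hEq : |f 0 * (∫ z : Fin n → ℝ, G z) + ε * 0
          + (ε^2/2) * (lapAt n f 0 / n * ∫ z : Fin n → ℝ, Sq z * G z)
          + (∫ z : Fin n → ℝ,
              (f (ε • z) - f 0 - L0 (ε • z) - (1/2) * B (ε • z) (ε • z)) * G z)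
          - f 0 * (∫ z : Fin n → ℝ, G z)
          - ε^2 * (lapAt n f 0 / (2 * n)) * ∫ z : Fin n → ℝ, Sq z * G z|
        = |∫ z : Fin n → ℝ,
            (f (ε • z) - f 0 - L0 (ε • z) - (1/2) * B (ε • z) (ε • z)) * G z| := by
      congr 1
      have hne : (n:ℝ) ≠ 0 := hnR.ne'
      field_simp
      ring
    rw [hEq]
    refine hRint.trans ?_
    have hε3 : (0:ℝ) < ε^3 := pow_pos hε 3
    nlinarith
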